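/- Let u : I → ℝ be hyperbolic p-convex and w : I → ℝ positive, integrable and symmetric about (a+b)/2 on [a,b] ⊂ I. Then ∫_a^b u(x)w(x) dx ≤ ((u(a)+u(b))/2)(cosh(p(b-a)/2))^{-1} ∫_a^b cosh[p(x-(a+b)/2)] w(x) dx + ((u(a)-u(b))/2)(sinh(p(b-a)/2))^{-1} ∫_a^b sinh[p(x-(a+b)/2)] w(x) dx. -/

import Mathlib

open Real MeasureTheory

def HypPConvexOn (p : ℝ) (I : Set ℝ) (f : ℝ → ℝ) : Prop :=
  ∀ a ∈ I, ∀ b ∈ I, a < b → ∀ x ∈ Set.Icc a b,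
    f x ≤ (Real.sinh (p * (b - x)) / Real.sinh (p * (b - a))) * f a +
          (Real.sinh (p * (x - a)) / Real.sinh (p * (b - a))) * f b

set_option maxHeartbeats 2000000 in
theorem dragomir_fejer_upper
    (I : Set ℝ) (p : ℝ) (hp : 0 < p) (u w : ℝ → ℝ)
    (hconv : HypPConvexOn p I u)
    (a b : ℝ) (ha : a ∈ I) (hb : b ∈ I) (hab : a < b) (hIab : Set.Icc a b ⊆ I)
    (hu : IntervalIntegrable u volume a b)
    (hw : IntervalIntegrable w volume a b)
    (hwpos : ∀ x ∈ Set.Icc a b, 0 < w x)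
    (hwsym : ∀ x ∈ Set.Icc a b, w (a + b - x) = w x) :
    (∫ x in a..b, u x * w x) ≤
      ((u a + u b) / 2) * (Real.cosh (p * (b - a) / 2))⁻¹ *
          (∫ x in a..b, Real.cosh (p * (x - (a + b) / 2)) * w x) +
        ((u a - u b) / 2) * (Real.sinh (p * (b - a) / 2))⁻¹ *
          ∫ x in a..b, Real.sinh (p * (x - (a + b) / 2)) * w x := by
  set m : ℝ := (a + b) / 2 with hm
  have hSpos : 0 < Real.sinh (p * (b - a) / 2) := by
    rw [Real.sinh_pos_iff]; nlinarith
  have hCpos : 0 < Real.cosh (p * (b - a) / 2) := Real.cosh_pos _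
  set S : ℝ := Real.sinh (p * (b - a) / 2) with hS
  set C : ℝ := Real.cosh (p * (b - a) / 2) with hC
  set A : ℝ := (u a + u b) / 2 * C⁻¹ with hA
  set B : ℝ := (u b - u a) / 2 * S⁻¹ with hB
  -- midpoint lemma
  have hmid : ∀ c ∈ I, ∀ d ∈ I, c < d →
      2 * Real.cosh (p * (d - c) / 2) * u ((c + d) / 2) ≤ u c + u d := by
    intro c hc d hd hcd
    have h := hconv c hc d hd hcd ((c + d) / 2) (by constructor <;> linarith)
    have e1 : p * (d - (c + d) / 2) = p * (d - c) / 2 := by ring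
    have e2 : p * ((c + d) / 2 - c) = p * (d - c) / 2 := by ring
    have e3 : p * (d - c) = 2 * (p * (d - c) / 2) := by ring
    have hs' : 0 < Real.sinh (p * (d - c) / 2) := by
      rw [Real.sinh_pos_iff]; nlinarith
    have hc' : 0 < Real.cosh (p * (d - c) / 2) := Real.cosh_pos _
    rw [e3, Real.sinh_two_mul, e1, e2, div_mul_eq_mul_div, div_mul_eq_mul_div,
      ← add_div, le_div_iff₀ (by positivity)] at h
    have h2 : Real.sinh (p * (d - c) / 2) * (2 * Real.cosh (p * (d - c) / 2) * u ((c + d) / 2)) ≤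
        Real.sinh (p * (d - c) / 2) * (u c + u d) := by nlinarith [h]
    exact le_of_mul_le_mul_left h2 hs'
  -- pointwise upper bound
  have hpt : ∀ x ∈ Set.Icc a b,
      u x ≤ A * Real.cosh (p * (x - m)) + B * Real.sinh (p * (x - m)) := by
    intro x hx
    have h := hconv a ha b hb hab x hx
    have e1 : p * (b - x) = p * (b - a) / 2 - p * (x - m) := by rw [hm]; ring
    have e2 : p * (x - a) = p * (x - m) + p * (b - a) / 2 := by rw [hm]; ring
    have e3 : p * (b - a) = 2 * (p * (b - a) / 2) := by ring
    rw [e3, Real.sinh_two_mul, e1, e2, Real.sinh_sub, Real.sinh_add, ← hS, ← hC] at h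
    have : (S * Real.cosh (p * (x - m)) - C * Real.sinh (p * (x - m))) / (2 * S * C) * u a +
        (Real.sinh (p * (x - m)) * C + Real.cosh (p * (x - m)) * S) / (2 * S * C) * u b =
        A * Real.cosh (p * (x - m)) + B * Real.sinh (p * (x - m)) := by
      rw [hA, hB]
      field_simp
      ring
    linarith [h, this.le, this.ge]
  -- continuity helpers
  have hcontC : ContinuousOn (fun x => Real.cosh (p * (x - m))) (Set.uIcc a b) :=
    (Real.continuous_cosh.comp (by fun_prop)).continuousOn
  have hcontS : ContinuousOn (fun x => Real.sinh (p * (x - m))) (Set.uIcc a b) :=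
    (Real.continuous_sinh.comp (by fun_prop)).continuousOn
  have hcoshInt : IntervalIntegrable (fun x => Real.cosh (p * (x - m)) * w x) volume a b :=
    hw.continuousOn_mul hcontC
  have hsinhInt : IntervalIntegrable (fun x => Real.sinh (p * (x - m)) * w x) volume a b :=
    hw.continuousOn_mul hcontS
  -- the sinh-weighted integral vanishes by symmetry
  set f : ℝ → ℝ := fun x => Real.sinh (p * (x - m)) * w x with hf
  have hJ : (∫ x in a..b, f x) = 0 := by
    have h1 : (∫ x in a..b, f (a + b - x)) = ∫ x in a..b, f x := by
      have := intervalIntegral.integral_comp_sub_left (a := a) (b := b) f (a + b)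
      simpa using this
    have h2 : Set.EqOn (fun x => f (a + b - x)) (fun x => -f x) (Set.uIcc a b) := by
      intro x hx
      rw [Set.uIcc_of_le hab.le] at hx
      have e : p * (a + b - x - m) = -(p * (x - m)) := by rw [hm]; ring
      simp only [hf]
      rw [e, Real.sinh_neg, hwsym x hx]
      ring
    have h3 : (∫ x in a..b, f (a + b - x)) = ∫ x in a..b, -f x :=
      intervalIntegral.integral_congr h2
    rw [h3, intervalIntegral.integral_neg] at h1
    linarith
  -- boundedness of u on [a,b]
  obtain ⟨M, hM⟩ := (isCompact_Icc (a := a) (b := b)).exists_bound_of_continuousOn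
    (f := fun x => A * Real.cosh (p * (x - m)) + B * Real.sinh (p * (x - m)))
    (by
      apply ContinuousOn.add
      · exact continuousOn_const.mul ((Real.continuous_cosh.comp (by fun_prop)).continuousOn)
      · exact continuousOn_const.mul ((Real.continuous_sinh.comp (by fun_prop)).continuousOn))
  have hMnn : 0 ≤ M := le_trans (norm_nonneg _) (hM a (by constructor <;> linarith))
  have hub : ∀ x ∈ Set.Icc a b, u x ≤ M := fun x hx =>
    le_trans (hpt x hx) (le_trans (le_abs_self _) (hM x hx))
  set K : ℝ := 2 * C * |u m| + M with hK
  have hC1 : (1 : ℝ) ≤ C := by rw [hC]; exact Real.one_le_cosh _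
  have hlb : ∀ x ∈ Set.Icc a b, -K ≤ u x := by
    intro x hx
    obtain ⟨hx1, hx2⟩ := hx
    have hmval : m = (a + b) / 2 := hm
    rcases lt_trichotomy x m with hlt | heq | hgt
    · have hlt' : 2 * x < a + b := by rw [hmval] at hlt; linarith
      have hx' : a + b - x ∈ Set.Icc a b := by constructor <;> linarith
      have h := hmid x (hIab ⟨hx1, hx2⟩) (a + b - x) (hIab hx') (by linarith)
      have e : (x + (a + b - x)) / 2 = m := by rw [hmval]; ring
      rw [e] at h
      have hd : Real.cosh (p * (a + b - x - x) / 2) ≤ C := by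
        rw [hC, Real.cosh_le_cosh]
        rw [abs_of_nonneg (by nlinarith), abs_of_nonneg (by nlinarith)]
        nlinarith
      have hd1 : (1 : ℝ) ≤ Real.cosh (p * (a + b - x - x) / 2) := Real.one_le_cosh _
      have hub' : u (a + b - x) ≤ M := hub _ hx'
      have t1 : 0 ≤ (C - Real.cosh (p * (a + b - x - x) / 2)) * |u m| :=
        mul_nonneg (by linarith) (abs_nonneg _)
      have t2 : 0 ≤ Real.cosh (p * (a + b - x - x) / 2) * (u m + |u m|) :=
        mul_nonneg (by linarith) (by linarith [neg_abs_le (u m)])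
      have habs : -(2 * C * |u m|) ≤ 2 * Real.cosh (p * (a + b - x - x) / 2) * u m := by
        nlinarith [t1, t2]
      rw [hK]; linarith
    · rw [hK, ← heq]
      have t : 0 ≤ (2 * C - 1) * |u x| := mul_nonneg (by linarith) (abs_nonneg _)
      nlinarith [t, neg_abs_le (u x), hMnn]
    · have hgt' : a + b < 2 * x := by rw [hmval] at hgt; linarith
      have hx' : a + b - x ∈ Set.Icc a b := by constructor <;> linarith
      have h := hmid (a + b - x) (hIab hx') x (hIab ⟨hx1, hx2⟩) (by linarith)
      have e : ((a + b - x) + x) / 2 = m := by rw [hmval]; ring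
      rw [e] at h
      have hd : Real.cosh (p * (x - (a + b - x)) / 2) ≤ C := by
        rw [hC, Real.cosh_le_cosh]
        rw [abs_of_nonneg (by nlinarith), abs_of_nonneg (by nlinarith)]
        nlinarith
      have hd1 : (1 : ℝ) ≤ Real.cosh (p * (x - (a + b - x)) / 2) := Real.one_le_cosh _
      have hub' : u (a + b - x) ≤ M := hub _ hx'
      have t1 : 0 ≤ (C - Real.cosh (p * (x - (a + b - x)) / 2)) * |u m| :=
        mul_nonneg (by linarith) (abs_nonneg _)
      have t2 : 0 ≤ Real.cosh (p * (x - (a + b - x)) / 2) * (u m + |u m|) :=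
        mul_nonneg (by linarith) (by linarith [neg_abs_le (u m)])
      have habs : -(2 * C * |u m|) ≤ 2 * Real.cosh (p * (x - (a + b - x)) / 2) * u m := by
        nlinarith [t1, t2]
      rw [hK]; linarith
  have hKnn : 0 ≤ K := by rw [hK]; positivity
  have hubound : ∀ x ∈ Set.Icc a b, |u x| ≤ K := by
    intro x hx
    rw [abs_le]
    refine ⟨hlb x hx, le_trans (hub x hx) ?_⟩
    rw [hK]; nlinarith [abs_nonneg (u m), Real.cosh_pos (p * (b - a) / 2)]
  -- integrability of u * w
  have huw : IntervalIntegrable (fun x => u x * w x) volume a b := by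
    apply IntervalIntegrable.mono_fun' ((hw.abs).const_mul K)
    · exact hu.aestronglyMeasurable.mul hw.aestronglyMeasurable |>.mono_measure
        (by rw [Set.uIoc_of_le hab.le])
    · refine MeasureTheory.ae_restrict_of_forall_mem measurableSet_uIoc fun x hx => ?_
      rw [Set.uIoc_of_le hab.le] at hx
      have hx' : x ∈ Set.Icc a b := Set.Ioc_subset_Icc_self hx
      show ‖u x * w x‖ ≤ K * |w x|
      rw [Real.norm_eq_abs, abs_mul]
      exact mul_le_mul_of_nonneg_right (hubound x hx') (abs_nonneg _)
  -- assemble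
  have hgwInt : IntervalIntegrable
      (fun x => (A * Real.cosh (p * (x - m)) + B * Real.sinh (p * (x - m))) * w x) volume a b := by
    have heq : (fun x => (A * Real.cosh (p * (x - m)) + B * Real.sinh (p * (x - m))) * w x) =
        fun x => A * (Real.cosh (p * (x - m)) * w x) + B * (Real.sinh (p * (x - m)) * w x) := by
      funext x; ring
    rw [heq]
    exact (hcoshInt.const_mul A).add (hsinhInt.const_mul B)
  have hmono : (∫ x in a..b, u x * w x) ≤
      ∫ x in a..b, (A * Real.cosh (p * (x - m)) + B * Real.sinh (p * (x - m))) * w x := by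
    apply intervalIntegral.integral_mono_on hab.le huw hgwInt
    intro x hx
    exact mul_le_mul_of_nonneg_right (hpt x hx) (hwpos x hx).le
  have heval : (∫ x in a..b, (A * Real.cosh (p * (x - m)) + B * Real.sinh (p * (x - m))) * w x) =
      A * (∫ x in a..b, Real.cosh (p * (x - m)) * w x) +
      B * (∫ x in a..b, Real.sinh (p * (x - m)) * w x) := by
    have heq : (fun x => (A * Real.cosh (p * (x - m)) + B * Real.sinh (p * (x - m))) * w x) =
        fun x => A * (Real.cosh (p * (x - m)) * w x) + B * (Real.sinh (p * (x - m)) * w x) := by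
      funext x; ring
    rw [heq, intervalIntegral.integral_add (hcoshInt.const_mul A) (hsinhInt.const_mul B),
      intervalIntegral.integral_const_mul, intervalIntegral.integral_const_mul]
  have hJ' : (∫ x in a..b, Real.sinh (p * (x - m)) * w x) = 0 := hJ
  rw [hJ', mul_zero, add_zero] at heval
  rw [heval] at hmono
  calc (∫ x in a..b, u x * w x)
      ≤ A * ∫ x in a..b, Real.cosh (p * (x - m)) * w x := hmono
    _ = (u a + u b) / 2 * C⁻¹ * (∫ x in a..b, Real.cosh (p * (x - m)) * w x) +
        (u a - u b) / 2 * S⁻¹ * ∫ x in a..b, Real.sinh (p * (x - m)) * w x := by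
        rw [hJ', mul_zero, add_zero, hA]
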